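/- Let d be a natural number and, for every pair (n₁, n₂) of natural numbers with n₁ + n₂ ≤ d, let M(n₁, n₂) be a finite-dimensional representation of S_{n₁} × S_{n₂} over ℚ. For a finite-dimensional ℚ-vector space V, set F(V) := ⊕_{n₁+n₂≤d} M(n₁, n₂) ⊗_{S_{n₁}×S_{n₂}} (V^{⊗n₁} ⊗ (V*)^{⊗n₂}), where M ⊗_Σ N denotes the Σ-coinvariants of M ⊗ N for the diagonal action, Σ = S_{n₁} × S_{n₂} acts on V^{⊗n₁} ⊗ (V*)^{⊗n₂} by permuting the respective tensor factors, GL(V) acts diagonally on V^{⊗n₁} ⊗ (V*)^{⊗n₂}, GL(V) acts on the dual space V* by g·φ = φ∘g⁻¹, and GL(V) acts trivially on M(n₁, n₂); this induces a GL(V)-action on F(V). If dim V > d, then the canonical inclusion of the GL(V)-invariants F(V)^{GL(V)} into the SL(V)-invariants F(V)^{SL(V)} is an equality of subspaces of F(V). -/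

import Mathlib

open scoped TensorProduct DirectSum

local notation "MP(" V ", " n₁ ", " n₂ ")" =>
  ((⨂[ℚ] (_ : Fin n₁), V) ⊗[ℚ] (⨂[ℚ] (_ : Fin n₂), Module.Dual ℚ V))

noncomputable instance instMixedACG (V : Type) [AddCommGroup V] [Module ℚ V]
    (M : Type) [AddCommGroup M] [Module ℚ M] (n₁ n₂ : ℕ) :
    AddCommGroup (M ⊗[ℚ] MP(V, n₁, n₂)) :=
  Module.addCommMonoidToAddCommGroup ℚ

section SchurBifunctor

variable (V : Type) [AddCommGroup V] [Module ℚ V]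

/-- The action of a pair of permutations on `V^{⊗n₁} ⊗ (V*)^{⊗n₂}`, permuting the respective
tensor factors. -/
noncomputable def permAct (n₁ n₂ : ℕ) (σ : Equiv.Perm (Fin n₁) × Equiv.Perm (Fin n₂)) :
    MP(V, n₁, n₂) →ₗ[ℚ] MP(V, n₁, n₂) :=
  TensorProduct.map
    ((PiTensorProduct.reindex ℚ (fun _ : Fin n₁ => V) σ.1).toLinearMap)
    ((PiTensorProduct.reindex ℚ (fun _ : Fin n₂ => Module.Dual ℚ V) σ.2).toLinearMap)

/-- The diagonal action of `g ∈ GL(V)` on `V^{⊗n₁} ⊗ (V*)^{⊗n₂}`, acting on `V*` by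
`g · φ = φ ∘ g⁻¹`. -/
noncomputable def glAct (n₁ n₂ : ℕ) (g : V ≃ₗ[ℚ] V) :
    MP(V, n₁, n₂) →ₗ[ℚ] MP(V, n₁, n₂) :=
  TensorProduct.map
    (PiTensorProduct.map fun _ => g.toLinearMap)
    (PiTensorProduct.map fun _ => g.symm.dualMap.toLinearMap)

variable (M : ℕ → ℕ → Type) [∀ n₁ n₂, AddCommGroup (M n₁ n₂)] [∀ n₁ n₂, Module ℚ (M n₁ n₂)]
variable (ρ : ∀ n₁ n₂, Representation ℚ (Equiv.Perm (Fin n₁) × Equiv.Perm (Fin n₂)) (M n₁ n₂))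

/-- The subspace of `Σ = S_{n₁} × S_{n₂}`-coinvariance relations in
`M(n₁,n₂) ⊗ V^{⊗n₁} ⊗ (V*)^{⊗n₂}`, for the diagonal action of `Σ`. -/
noncomputable def sigmaRel (n₁ n₂ : ℕ) : Submodule ℚ (M n₁ n₂ ⊗[ℚ] MP(V, n₁, n₂)) :=
  Submodule.span ℚ
    {y | ∃ (σ : Equiv.Perm (Fin n₁) × Equiv.Perm (Fin n₂))
      (z : M n₁ n₂ ⊗[ℚ] MP(V, n₁, n₂)),
      y = z - TensorProduct.map (ρ n₁ n₂ σ) (permAct V n₁ n₂ σ) z}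

/-- The summand `M(n₁,n₂) ⊗_{Σ} (V^{⊗n₁} ⊗ (V*)^{⊗n₂})`, i.e. the `Σ`-coinvariants of
`M(n₁,n₂) ⊗ V^{⊗n₁} ⊗ (V*)^{⊗n₂}`. -/
noncomputable def schurSummand (n₁ n₂ : ℕ) : Type :=
  (M n₁ n₂ ⊗[ℚ] MP(V, n₁, n₂)) ⧸ sigmaRel V M ρ n₁ n₂

noncomputable instance (n₁ n₂ : ℕ) : AddCommGroup (schurSummand V M ρ n₁ n₂) :=
  Submodule.Quotient.addCommGroup _

noncomputable instance (n₁ n₂ : ℕ) : Module ℚ (schurSummand V M ρ n₁ n₂) :=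
  Submodule.Quotient.module _

/-- `F(V) = ⊕_{n₁+n₂ ≤ d} M(n₁,n₂) ⊗_{Σ} (V^{⊗n₁} ⊗ (V*)^{⊗n₂})`. -/
noncomputable def schurValue (d : ℕ) : Type :=
  ⨁ (p : {nn : ℕ × ℕ // nn.1 + nn.2 ≤ d}), schurSummand V M ρ p.1.1 p.1.2

noncomputable instance (d : ℕ) : AddCommGroup (schurValue V M ρ d) := by
  unfold schurValue; infer_instance

noncomputable instance (d : ℕ) : Module ℚ (schurValue V M ρ d) := by
  unfold schurValue; infer_instance

end SchurBifunctor


/- ======================  Auxiliary material for the proof  ====================== -/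

namespace Stmt9

open Finset

section PolyFamilies

variable {W W' W'' : Type*} [AddCommGroup W] [Module ℚ W] [AddCommGroup W'] [Module ℚ W']
  [AddCommGroup W''] [Module ℚ W'']

/-- `f : ℚ → W` is given, away from `0`, by a polynomial of degree at most `D` with
coefficients in `W`. -/
def IsPD (D : ℕ) (f : ℚ → W) : Prop :=
  ∃ c : ℕ → W, ∀ t : ℚ, t ≠ 0 → f t = ∑ j ∈ Finset.range (D + 1), t ^ j • c j

theorem IsPD.congr {D : ℕ} {f g : ℚ → W} (hf : IsPD D f) (h : ∀ t : ℚ, t ≠ 0 → f t = g t) :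
    IsPD D g := by
  obtain ⟨c, hc⟩ := hf
  exact ⟨c, fun t ht => (h t ht) ▸ hc t ht⟩

theorem IsPD.const (D : ℕ) (w : W) : IsPD D (fun _ => w) := by
  refine ⟨fun j => if j = 0 then w else 0, fun t ht => ?_⟩
  rw [Finset.sum_eq_single_of_mem 0 (by simp)]
  · simp
  · intro j _ hj
    simp [hj]

theorem IsPD.mono {D E : ℕ} (h : D ≤ E) {f : ℚ → W} (hf : IsPD D f) : IsPD E f := by
  obtain ⟨c, hc⟩ := hf
  refine ⟨fun j => if j ≤ D then c j else 0, fun t ht => ?_⟩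
  rw [hc t ht]
  calc ∑ j ∈ Finset.range (D + 1), t ^ j • c j
      = ∑ j ∈ Finset.range (D + 1), t ^ j • (if j ≤ D then c j else 0) := by
        apply Finset.sum_congr rfl
        intro j hj
        rw [Finset.mem_range] at hj
        rw [if_pos (by omega)]
    _ = ∑ j ∈ Finset.range (E + 1), t ^ j • (if j ≤ D then c j else 0) := by
        apply Finset.sum_subset (Finset.range_subset_range.2 (by omega))
        intro j _ hj
        rw [Finset.mem_range, not_lt] at hj
        rw [if_neg (by omega), smul_zero]

theorem IsPD.add {D : ℕ} {f g : ℚ → W} (hf : IsPD D f) (hg : IsPD D g) :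
    IsPD D (fun t => f t + g t) := by
  obtain ⟨c, hc⟩ := hf
  obtain ⟨e, he⟩ := hg
  refine ⟨fun j => c j + e j, fun t ht => ?_⟩
  simp [hc t ht, he t ht, Finset.sum_add_distrib, smul_add]

theorem IsPD.map {D : ℕ} {f : ℚ → W} (hf : IsPD D f) (L : W →ₗ[ℚ] W') :
    IsPD D (fun t => L (f t)) := by
  obtain ⟨c, hc⟩ := hf
  exact ⟨fun j => L (c j), fun t ht => by
    show L (f t) = _
    rw [hc t ht, map_sum]; simp⟩

theorem IsPD.shift {D : ℕ} {f : ℚ → W} (hf : IsPD D f) (k : ℕ) :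
    IsPD (k + D) (fun t => t ^ k • f t) := by
  obtain ⟨c, hc⟩ := hf
  refine ⟨fun j => if k ≤ j then c (j - k) else 0, fun t ht => ?_⟩
  show t ^ k • f t = _
  rw [hc t ht, Finset.smul_sum]
  rw [show Finset.range (k + D + 1) = Finset.Ico 0 (k + D + 1) by simp,
    ← Finset.sum_Ico_consecutive _ (Nat.zero_le k) (by omega : k ≤ k + D + 1)]
  have h1 : ∀ j ∈ Finset.Ico 0 k, t ^ j • (if k ≤ j then c (j - k) else 0) = 0 := by
    intro j hj
    rw [Finset.mem_Ico] at hj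
    rw [if_neg (by omega), smul_zero]
  rw [Finset.sum_congr rfl h1, Finset.sum_const_zero, zero_add,
    Finset.sum_Ico_eq_sum_range]
  have h2 : k + D + 1 - k = D + 1 := by omega
  rw [h2]
  apply Finset.sum_congr rfl
  intro j _
  show t ^ k • t ^ j • c j = t ^ (k + j) • (if k ≤ k + j then c (k + j - k) else 0)
  rw [if_pos (by omega), Nat.add_sub_cancel_left, smul_smul, ← pow_add]

theorem IsPD.bilin {D E : ℕ} {f : ℚ → W} {g : ℚ → W'} (hf : IsPD D f) (hg : IsPD E g)
    (B : W →ₗ[ℚ] W' →ₗ[ℚ] W'') : IsPD (D + E) (fun t => B (f t) (g t)) := by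
  obtain ⟨c, hc⟩ := hf
  obtain ⟨e, he⟩ := hg
  refine ⟨fun l => ∑ j ∈ Finset.range (D + 1), ∑ k ∈ Finset.range (E + 1),
    if j + k = l then B (c j) (e k) else 0, fun t ht => ?_⟩
  have key : ∀ l, (t ^ l • ∑ j ∈ Finset.range (D + 1), ∑ k ∈ Finset.range (E + 1),
      if j + k = l then B (c j) (e k) else 0)
      = ∑ j ∈ Finset.range (D + 1), ∑ k ∈ Finset.range (E + 1),
        if j + k = l then t ^ (j + k) • B (c j) (e k) else 0 := by
    intro l
    rw [Finset.smul_sum]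
    refine Finset.sum_congr rfl fun j _ => ?_
    rw [Finset.smul_sum]
    refine Finset.sum_congr rfl fun k _ => ?_
    rw [smul_ite, smul_zero]
    by_cases h : j + k = l
    · rw [if_pos h, if_pos h, h]
    · rw [if_neg h, if_neg h]
  show B (f t) (g t) = _
  calc B (f t) (g t)
      = ∑ j ∈ Finset.range (D + 1), ∑ k ∈ Finset.range (E + 1),
        t ^ (j + k) • B (c j) (e k) := by
        rw [hc t ht, he t ht]
        simp only [map_sum, map_smul, LinearMap.sum_apply, LinearMap.smul_apply,
          Finset.smul_sum, smul_smul, ← pow_add]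
        rw [Finset.sum_comm]
        exact Finset.sum_congr rfl fun j _ => Finset.sum_congr rfl fun k _ => by
          rw [add_comm k j]
    _ = ∑ l ∈ Finset.range (D + E + 1), t ^ l •
        ∑ j ∈ Finset.range (D + 1), ∑ k ∈ Finset.range (E + 1),
          if j + k = l then B (c j) (e k) else 0 := by
        have hsw : (∑ l ∈ Finset.range (D + E + 1), ∑ j ∈ Finset.range (D + 1),
            ∑ k ∈ Finset.range (E + 1), if j + k = l then t ^ (j + k) • B (c j) (e k) else 0)
            = ∑ j ∈ Finset.range (D + 1), ∑ k ∈ Finset.range (E + 1),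
              t ^ (j + k) • B (c j) (e k) := by
          rw [Finset.sum_comm]
          refine Finset.sum_congr rfl fun j hj => ?_
          rw [Finset.sum_comm]
          refine Finset.sum_congr rfl fun k hk => ?_
          rw [Finset.mem_range] at hj hk
          rw [Finset.sum_ite_eq (Finset.range (D + E + 1)) (j + k)
            (fun _ => t ^ (j + k) • B (c j) (e k)), if_pos (Finset.mem_range.2 (by omega))]
        rw [Finset.sum_congr rfl (fun l (_ : l ∈ Finset.range (D + E + 1)) => key l)]
        exact hsw.symm

theorem isPD_multilinear {ι : Type*} [Fintype ι] [DecidableEq ι] {Vi : ι → Type*}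
    [∀ i, AddCommGroup (Vi i)] [∀ i, Module ℚ (Vi i)]
    (m : MultilinearMap ℚ Vi W) (a b : ∀ i, Vi i) :
    IsPD (Fintype.card ι) (fun t => m (a + t • b)) := by
  refine ⟨fun j => ∑ s ∈ Finset.univ.filter (fun s : Finset ι => s.card = j),
    m (s.piecewise b a), fun t ht => ?_⟩
  have key : ∀ s : Finset ι, m (s.piecewise (t • b) a) = t ^ s.card • m (s.piecewise b a) := by
    intro s
    have hpw : s.piecewise (t • b) a
        = s.piecewise (fun i => t • (s.piecewise b a) i) (s.piecewise b a) := by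
      ext i
      by_cases h : i ∈ s <;> simp [Finset.piecewise, h]
    rw [hpw, m.map_piecewise_smul (fun _ => t) (s.piecewise b a) s, Finset.prod_const]
  have expand : m (a + t • b) = ∑ s : Finset ι, t ^ s.card • m (s.piecewise b a) := by
    rw [add_comm, m.map_add_univ (t • b) a]
    exact Finset.sum_congr rfl fun s _ => key s
  show m (a + t • b) = _
  rw [expand, ← Finset.sum_fiberwise_of_maps_to
    (fun s _ => Finset.mem_range.2 (Nat.lt_succ_of_le (Finset.card_le_univ s)))
    (fun s => t ^ s.card • m (s.piecewise b a))]
  apply Finset.sum_congr rfl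
  intro j _
  rw [Finset.smul_sum]
  apply Finset.sum_congr rfl
  intro s hs
  rw [Finset.mem_filter] at hs
  rw [hs.2]

variable {A B : Type*} [AddCommGroup A] [Module ℚ A] [AddCommGroup B] [Module ℚ B]

theorem isPD_piMap {k : ℕ} (f g : A →ₗ[ℚ] B) (w : ⨂[ℚ] (_ : Fin k), A) :
    IsPD k (fun t => PiTensorProduct.map (fun _ : Fin k => f + t • g) w) := by
  induction w using PiTensorProduct.induction_on with
  | smul_tprod r v =>
      have base := isPD_multilinear (W := ⨂[ℚ] (_ : Fin k), B)
        (PiTensorProduct.tprod ℚ (s := fun _ : Fin k => B))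
        (fun i => f (v i)) (fun i => g (v i))
      simp only [Fintype.card_fin] at base
      refine (base.map (r • (LinearMap.id : (⨂[ℚ] (_ : Fin k), B) →ₗ[ℚ] _))).congr ?_
      intro t ht
      have harg : ((fun i => f (v i)) + t • fun i => g (v i))
          = fun i : Fin k => (f + t • g) (v i) := by
        funext i
        simp
      rw [map_smul (PiTensorProduct.map fun _ : Fin k => f + t • g) r
        (PiTensorProduct.tprod ℚ v), PiTensorProduct.map_tprod, harg]
      simp
  | add x y hx hy =>
      refine (hx.add hy).congr ?_
      intro t ht
      rw [map_add]

theorem piMap_smul {k : ℕ} (c : ℚ) (f : A →ₗ[ℚ] B) (w : ⨂[ℚ] (_ : Fin k), A) :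
    PiTensorProduct.map (fun _ : Fin k => c • f) w
      = c ^ k • PiTensorProduct.map (fun _ : Fin k => f) w := by
  induction w using PiTensorProduct.induction_on with
  | smul_tprod r v =>
      rw [map_smul, map_smul, PiTensorProduct.map_tprod, PiTensorProduct.map_tprod]
      have := MultilinearMap.map_smul_univ (PiTensorProduct.tprod ℚ (s := fun _ : Fin k => B))
        (fun _ => c) (fun i => f (v i))
      simp only [Finset.prod_const, Finset.card_univ, Fintype.card_fin] at this
      simp only [LinearMap.smul_apply]
      rw [this, smul_comm]
  | add x y hx hy =>
      rw [map_add, map_add, hx, hy, smul_add]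

/-- Coefficient extraction: if `t ^ E₁ • v = ∑_j t ^ (e j) • c j` for all nonzero rational `t`,
then for every exponent `E`, the sum of the coefficients `c j` with `e j = E` equals `v` if
`E = E₁` and `0` otherwise. -/
theorem coeff_extract' (m : ℕ) (e : ℕ → ℕ) (c : ℕ → W) (E₁ : ℕ) (v : W)
    (h : ∀ t : ℚ, t ≠ 0 → t ^ E₁ • v = ∑ j ∈ Finset.range m, t ^ (e j) • c j) (E : ℕ) :
    ∑ j ∈ (Finset.range m).filter (fun j => e j = E), c j = if E₁ = E then v else 0 := by
  rw [← sub_eq_zero, ← Module.forall_dual_apply_eq_zero_iff ℚ]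
  intro φ
  set q : Polynomial ℚ := (∑ j ∈ Finset.range m, Polynomial.monomial (e j) (φ (c j)))
    - Polynomial.monomial E₁ (φ v) with hq
  have hroot : ∀ t : ℚ, t ≠ 0 → q.eval t = 0 := by
    intro t ht
    have h2 := congrArg φ (h t ht)
    rw [map_smul, map_sum] at h2
    simp only [map_smul, smul_eq_mul] at h2
    rw [hq]
    simp only [Polynomial.eval_sub, Polynomial.eval_finset_sum, Polynomial.eval_monomial]
    rw [sub_eq_zero]
    rw [Finset.sum_congr rfl (fun j (_ : j ∈ Finset.range m) =>
      mul_comm (φ (c j)) (t ^ (e j))), ← h2, mul_comm]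
  have hq0 : q = 0 := by
    apply Polynomial.eq_zero_of_infinite_isRoot
    apply Set.Infinite.mono (s := ({0}ᶜ : Set ℚ))
    · intro t ht
      exact hroot t ht
    · exact (Set.finite_singleton (0 : ℚ)).infinite_compl
  have hco := congrArg (fun p : Polynomial ℚ => p.coeff E) hq0
  simp only [hq, Polynomial.coeff_sub, Polynomial.finset_sum_coeff, Polynomial.coeff_monomial,
    Polynomial.coeff_zero] at hco
  rw [map_sub, map_sum, Finset.sum_filter, apply_ite φ, map_zero]
  exact hco

end PolyFamilies

theorem key_arith {n d n₁ n₂ k : ℕ} (hd : d < n) (h1 : n₁ ≤ d) (h2 : n₂ ≤ d)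
    (h : n * d + n₁ = n * k + n₂) : n₁ = n₂ ∧ k = d := by
  rcases Nat.lt_trichotomy k d with hlt | rfl | hgt
  · exfalso
    have h5 : n * k + n ≤ n * d := by
      have h6 := Nat.mul_le_mul_left n (Nat.succ_le_of_lt hlt)
      rw [Nat.mul_succ] at h6
      exact h6
    omega
  · omega
  · exfalso
    have h5 : n * d + n ≤ n * k := by
      have h6 := Nat.mul_le_mul_left n (Nat.succ_le_of_lt hgt)
      rw [Nat.mul_succ] at h6
      exact h6
    omega

section Families

set_option linter.unusedSectionVars false

variable (V : Type) [AddCommGroup V] [Module ℚ V] [FiniteDimensional ℚ V]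

/-- Projection onto the line spanned by the first vector of a fixed basis. -/
noncomputable def projP (h : 0 < Module.finrank ℚ V) : V →ₗ[ℚ] V :=
  ((Module.finBasis ℚ V).coord ⟨0, h⟩).smulRight ((Module.finBasis ℚ V) ⟨0, h⟩)

/-- The linear map `id + (t - 1) P`, i.e. scaling the first basis vector by `t`. -/
noncomputable def sigL (h : 0 < Module.finrank ℚ V) (t : ℚ) : V →ₗ[ℚ] V :=
  LinearMap.id + (t - 1) • projP V h

theorem projP_idem (h : 0 < Module.finrank ℚ V) (v : V) :
    projP V h (projP V h v) = projP V h v := by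
  simp [projP, LinearMap.smulRight_apply, map_smul, Module.Basis.coord_apply, Module.Basis.repr_self]

theorem sigL_one (h : 0 < Module.finrank ℚ V) : sigL V h 1 = LinearMap.id := by
  simp [sigL]

theorem sigL_comp (h : 0 < Module.finrank ℚ V) (t s : ℚ) :
    (sigL V h t).comp (sigL V h s) = sigL V h (t * s) := by
  ext v
  simp only [sigL, LinearMap.comp_apply, LinearMap.add_apply, LinearMap.id_apply,
    LinearMap.smul_apply, map_add, map_smul, projP_idem]
  match_scalars <;> ring

/-- The automorphism of `V` scaling the first basis vector by `t` (junk value at `t = 0`). -/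
noncomputable def sigE (h : 0 < Module.finrank ℚ V) (t : ℚ) : V ≃ₗ[ℚ] V :=
  if ht : t = 0 then LinearEquiv.refl ℚ V else
    LinearEquiv.ofLinear (sigL V h t) (sigL V h t⁻¹)
      (by rw [sigL_comp, mul_inv_cancel₀ ht, sigL_one])
      (by rw [sigL_comp, inv_mul_cancel₀ ht, sigL_one])

theorem sigE_coe (h : 0 < Module.finrank ℚ V) {t : ℚ} (ht : t ≠ 0) :
    (sigE V h t).toLinearMap = sigL V h t := by
  rw [sigE, dif_neg ht]
  rfl

/-- Decomposition of `sigL` as constant plus `t •` constant. -/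
theorem sigL_decomp (h : 0 < Module.finrank ℚ V) (t : ℚ) :
    (LinearMap.id - projP V h) + t • projP V h = sigL V h t := by
  ext v
  simp only [sigL, LinearMap.add_apply, LinearMap.sub_apply, LinearMap.id_apply,
    LinearMap.smul_apply]
  match_scalars <;> ring

/-- Decomposition of the dual-side family as constant plus `t •` constant. -/
theorem sigE_dual_decomp (h : 0 < Module.finrank ℚ V) {t : ℚ} (ht : t ≠ 0) :
    (projP V h).dualMap + t • (LinearMap.id - (projP V h).dualMap)
      = t • ((sigE V h t).symm.dualMap.toLinearMap
          : Module.Dual ℚ V →ₗ[ℚ] Module.Dual ℚ V) := by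
  have hcoe : ((sigE V h t).symm.dualMap.toLinearMap
      : Module.Dual ℚ V →ₗ[ℚ] Module.Dual ℚ V) = (sigL V h t⁻¹).dualMap := by
    ext φ v
    rw [sigE, dif_neg ht]
    rfl
  rw [hcoe]
  ext φ v
  simp only [LinearMap.add_apply, LinearMap.smul_apply, LinearMap.sub_apply,
    LinearMap.id_apply, LinearMap.dualMap_apply, sigL, smul_eq_mul, map_add, map_smul]
  field_simp
  ring

theorem sigE_det (h : 0 < Module.finrank ℚ V) {t : ℚ} (ht : t ≠ 0) :
    LinearMap.det ((sigE V h t) : V →ₗ[ℚ] V) = t := by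
  show LinearMap.det (sigE V h t).toLinearMap = t
  rw [sigE_coe V h ht]
  set b := Module.finBasis ℚ V
  set i0 : Fin (Module.finrank ℚ V) := ⟨0, h⟩
  have hmat : LinearMap.toMatrix b b (sigL V h t)
      = Matrix.diagonal (fun i => if i = i0 then t else 1) := by
    ext i j
    rw [LinearMap.toMatrix_apply]
    have hrepr : (b.repr ((sigL V h t) (b j))) i
        = (if j = i then 1 else 0)
          + (t - 1) * ((if j = i0 then 1 else 0) * (if i0 = i then 1 else 0)) := by
      simp only [sigL, projP, LinearMap.add_apply, LinearMap.id_apply, LinearMap.smul_apply,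
        LinearMap.smulRight_apply, Module.Basis.coord_apply, map_add, map_smul, Module.Basis.repr_self,
        Finsupp.coe_add, Finsupp.coe_smul, Pi.add_apply, Pi.smul_apply,
        Finsupp.single_apply, smul_eq_mul]
      simp only [b, i0, Module.Basis.repr_self, Finsupp.single_apply]
    rw [hrepr, Matrix.diagonal_apply]
    clear hrepr
    rcases eq_or_ne i j with rfl | hij
    · rcases eq_or_ne i i0 with rfl | hii
      · simp only [eq_self_iff_true, if_true]
        ring
      · simp only [eq_self_iff_true, if_true, hii, Ne.symm hii, if_false]
        ring
    · simp only [hij, Ne.symm hij, if_false]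
      rcases eq_or_ne j i0 with rfl | hj0
      · simp only [eq_self_iff_true, if_true, Ne.symm hij, if_false]
        ring
      · simp only [hj0, if_false]
        ring
  rw [← LinearMap.det_toMatrix b, hmat, Matrix.det_diagonal]
  rw [Finset.prod_eq_single i0 (fun i _ hi => by rw [if_neg hi]) (by simp)]
  rw [if_pos rfl]

/-- The scalar automorphism `t • id` (junk value at `t = 0`). -/
noncomputable def scalE (t : ℚ) : V ≃ₗ[ℚ] V :=
  if ht : t = 0 then LinearEquiv.refl ℚ V else
    LinearEquiv.ofLinear (t • LinearMap.id) (t⁻¹ • LinearMap.id)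
      (by ext v; simp [smul_smul, mul_inv_cancel₀ ht, inv_mul_cancel₀ ht])
      (by ext v; simp [smul_smul, mul_inv_cancel₀ ht, inv_mul_cancel₀ ht])

theorem scalE_coe {t : ℚ} (ht : t ≠ 0) :
    (scalE V t).toLinearMap = t • LinearMap.id := by
  rw [scalE, dif_neg ht]
  rfl

theorem scalE_symm_dualMap {t : ℚ} (ht : t ≠ 0) :
    ((scalE V t).symm.dualMap.toLinearMap
        : Module.Dual ℚ V →ₗ[ℚ] Module.Dual ℚ V)
      = t⁻¹ • LinearMap.id := by
  ext φ v
  rw [scalE, dif_neg ht]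
  simp [LinearEquiv.dualMap_apply, LinearEquiv.ofLinear_symm_apply, smul_eq_mul,
    LinearEquiv.coe_coe]

theorem scalE_det {t : ℚ} (ht : t ≠ 0) :
    LinearMap.det ((scalE V t) : V →ₗ[ℚ] V) = t ^ (Module.finrank ℚ V) := by
  show LinearMap.det ((scalE V t).toLinearMap) = _
  rw [scalE_coe V ht, LinearMap.det_smul, LinearMap.det_id, mul_one]

end Families

section GlAct

variable (V : Type) [AddCommGroup V] [Module ℚ V]

theorem glAct_comp (n₁ n₂ : ℕ) (g h : V ≃ₗ[ℚ] V) :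
    glAct V n₁ n₂ (h.trans g) = (glAct V n₁ n₂ g).comp (glAct V n₁ n₂ h) := by
  unfold glAct
  rw [← TensorProduct.map_comp, ← PiTensorProduct.map_comp, ← PiTensorProduct.map_comp]
  have h1 : (fun _ : Fin n₁ => (h.trans g).toLinearMap)
      = fun _ : Fin n₁ => g.toLinearMap ∘ₗ h.toLinearMap := by
    funext _
    ext v
    rfl
  have h2 : (fun _ : Fin n₂ => ((h.trans g).symm.dualMap.toLinearMap
      : Module.Dual ℚ V →ₗ[ℚ] Module.Dual ℚ V))
      = fun _ : Fin n₂ => (g.symm.dualMap.toLinearMap : Module.Dual ℚ V →ₗ[ℚ] Module.Dual ℚ V)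
          ∘ₗ (h.symm.dualMap.toLinearMap : Module.Dual ℚ V →ₗ[ℚ] Module.Dual ℚ V) := by
    funext _
    ext φ v
    rfl
  rw [h1, h2]

theorem glAct_refl (n₁ n₂ : ℕ) :
    glAct V n₁ n₂ (LinearEquiv.refl ℚ V) = LinearMap.id := by
  unfold glAct
  have h1 : (fun _ : Fin n₁ => (LinearEquiv.refl ℚ V).toLinearMap)
      = fun _ : Fin n₁ => (LinearMap.id : V →ₗ[ℚ] V) := rfl
  have h2 : (fun _ : Fin n₂ => ((LinearEquiv.refl ℚ V).symm.dualMap.toLinearMap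
        : Module.Dual ℚ V →ₗ[ℚ] Module.Dual ℚ V))
      = fun _ : Fin n₂ => (LinearMap.id : Module.Dual ℚ V →ₗ[ℚ] Module.Dual ℚ V) := by
    funext _
    ext φ v
    rfl
  rw [h1, h2, PiTensorProduct.map_id, PiTensorProduct.map_id, TensorProduct.map_id]

theorem glAct_scalE [FiniteDimensional ℚ V] (t : ℚ) (ht : t ≠ 0) (n₁ n₂ : ℕ) :
    glAct V n₁ n₂ (scalE V t) = (t ^ n₁ * (t⁻¹) ^ n₂) • LinearMap.id := by
  apply TensorProduct.ext'
  intro w w'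
  unfold glAct
  rw [TensorProduct.map_tmul]
  simp only [scalE_coe V ht, scalE_symm_dualMap V ht]
  rw [piMap_smul, piMap_smul, PiTensorProduct.map_id, PiTensorProduct.map_id]
  simp only [LinearMap.id_coe, id_eq, LinearMap.smul_apply, LinearMap.id_apply]
  rw [TensorProduct.tmul_smul, ← TensorProduct.smul_tmul', smul_smul, mul_comm]

end GlAct

section Main

variable (V : Type) [AddCommGroup V] [Module ℚ V]
variable (d : ℕ)
variable (M : ℕ → ℕ → Type) [∀ n₁ n₂, AddCommGroup (M n₁ n₂)] [∀ n₁ n₂, Module ℚ (M n₁ n₂)]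
variable (ρ : ∀ n₁ n₂, Representation ℚ (Equiv.Perm (Fin n₁) × Equiv.Perm (Fin n₂)) (M n₁ n₂))
variable (act : (V ≃ₗ[ℚ] V) → (schurValue V M ρ d →ₗ[ℚ] schurValue V M ρ d))

/-- Projection onto the `p`-th component of `F(V)`. -/
noncomputable def pcomp (p : {nn : ℕ × ℕ // nn.1 + nn.2 ≤ d}) :
    schurValue V M ρ d →ₗ[ℚ] schurSummand V M ρ p.1.1 p.1.2 :=
  DirectSum.component ℚ {nn : ℕ × ℕ // nn.1 + nn.2 ≤ d}
    (fun q => schurSummand V M ρ q.1.1 q.1.2) p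

theorem pcomp_of_same (p : {nn : ℕ × ℕ // nn.1 + nn.2 ≤ d})
    (u : schurSummand V M ρ p.1.1 p.1.2) :
    pcomp V d M ρ p (DirectSum.of (fun q : {nn : ℕ × ℕ // nn.1 + nn.2 ≤ d} =>
      schurSummand V M ρ q.1.1 q.1.2) p u) = u :=
  DirectSum.component.lof_self (R := ℚ)
    (M := fun q : {nn : ℕ × ℕ // nn.1 + nn.2 ≤ d} => schurSummand V M ρ q.1.1 q.1.2) p u

theorem pcomp_of_ne (p q : {nn : ℕ × ℕ // nn.1 + nn.2 ≤ d}) (h : q ≠ p)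
    (u : schurSummand V M ρ q.1.1 q.1.2) :
    pcomp V d M ρ p (DirectSum.of (fun q' : {nn : ℕ × ℕ // nn.1 + nn.2 ≤ d} =>
      schurSummand V M ρ q'.1.1 q'.1.2) q u) = 0 := by
  have h2 := DirectSum.component.of (R := ℚ)
    (M := fun q' : {nn : ℕ × ℕ // nn.1 + nn.2 ≤ d} => schurSummand V M ρ q'.1.1 q'.1.2) p q u
  rw [dif_neg h] at h2
  exact h2

theorem pcomp_ext {x y : schurValue V M ρ d}
    (h : ∀ p, pcomp V d M ρ p x = pcomp V d M ρ p y) : x = y :=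
  DirectSum.ext h

/-- The defining property of `act`, phrased with `DirectSum.of`. -/
theorem act_of
    (hact : ∀ (g : V ≃ₗ[ℚ] V) (p : {nn : ℕ × ℕ // nn.1 + nn.2 ≤ d})
      (z : M p.1.1 p.1.2 ⊗[ℚ] MP(V, p.1.1, p.1.2)),
      act g (DirectSum.lof ℚ {nn : ℕ × ℕ // nn.1 + nn.2 ≤ d}
          (fun p => schurSummand V M ρ p.1.1 p.1.2) p (Submodule.Quotient.mk z)) =
        DirectSum.lof ℚ {nn : ℕ × ℕ // nn.1 + nn.2 ≤ d}
          (fun p => schurSummand V M ρ p.1.1 p.1.2) p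
          (Submodule.Quotient.mk
            (TensorProduct.map LinearMap.id (glAct V p.1.1 p.1.2 g) z)))
    (g : V ≃ₗ[ℚ] V) (p : {nn : ℕ × ℕ // nn.1 + nn.2 ≤ d})
    (z : M p.1.1 p.1.2 ⊗[ℚ] MP(V, p.1.1, p.1.2)) :
    act g (DirectSum.of (fun q : {nn : ℕ × ℕ // nn.1 + nn.2 ≤ d} =>
        schurSummand V M ρ q.1.1 q.1.2) p (Submodule.Quotient.mk z))
      = DirectSum.of (fun q : {nn : ℕ × ℕ // nn.1 + nn.2 ≤ d} =>
          schurSummand V M ρ q.1.1 q.1.2) p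
        (Submodule.Quotient.mk (TensorProduct.map LinearMap.id (glAct V p.1.1 p.1.2 g) z)) :=
  hact g p z

variable {V d M ρ act} in
theorem act_trans
    (hact : ∀ (g : V ≃ₗ[ℚ] V) (p : {nn : ℕ × ℕ // nn.1 + nn.2 ≤ d})
      (z : M p.1.1 p.1.2 ⊗[ℚ] MP(V, p.1.1, p.1.2)),
      act g (DirectSum.lof ℚ {nn : ℕ × ℕ // nn.1 + nn.2 ≤ d}
          (fun p => schurSummand V M ρ p.1.1 p.1.2) p (Submodule.Quotient.mk z)) =
        DirectSum.lof ℚ {nn : ℕ × ℕ // nn.1 + nn.2 ≤ d}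
          (fun p => schurSummand V M ρ p.1.1 p.1.2) p
          (Submodule.Quotient.mk
            (TensorProduct.map LinearMap.id (glAct V p.1.1 p.1.2 g) z)))
    (g h' : V ≃ₗ[ℚ] V) (y : schurValue V M ρ d) :
    act (h'.trans g) y = act g (act h' y) := by
  refine DirectSum.induction_on y ?_ ?_ ?_
  · erw [map_zero, map_zero, map_zero]
  · intro p u
    obtain ⟨z, rfl⟩ := Submodule.Quotient.mk_surjective _ u
    rw [act_of V d M ρ act hact (h'.trans g) p z, act_of V d M ρ act hact h' p z,
      act_of V d M ρ act hact g p _]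
    have hz : TensorProduct.map LinearMap.id (glAct V p.1.1 p.1.2 (h'.trans g)) z
        = TensorProduct.map LinearMap.id (glAct V p.1.1 p.1.2 g)
          (TensorProduct.map LinearMap.id (glAct V p.1.1 p.1.2 h') z) := by
      rw [glAct_comp, ← LinearMap.comp_apply, ← TensorProduct.map_comp, LinearMap.id_comp]
    rw [hz]
  · intro y₁ y₂ h₁ h₂
    erw [map_add, map_add, map_add, h₁, h₂]

variable {V d M ρ act} in
theorem act_isPD [FiniteDimensional ℚ V]
    (hact : ∀ (g : V ≃ₗ[ℚ] V) (p : {nn : ℕ × ℕ // nn.1 + nn.2 ≤ d})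
      (z : M p.1.1 p.1.2 ⊗[ℚ] MP(V, p.1.1, p.1.2)),
      act g (DirectSum.lof ℚ {nn : ℕ × ℕ // nn.1 + nn.2 ≤ d}
          (fun p => schurSummand V M ρ p.1.1 p.1.2) p (Submodule.Quotient.mk z)) =
        DirectSum.lof ℚ {nn : ℕ × ℕ // nn.1 + nn.2 ≤ d}
          (fun p => schurSummand V M ρ p.1.1 p.1.2) p
          (Submodule.Quotient.mk
            (TensorProduct.map LinearMap.id (glAct V p.1.1 p.1.2 g) z)))
    (hn0 : 0 < Module.finrank ℚ V) (y : schurValue V M ρ d) :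
    IsPD (2 * d) (fun t : ℚ => t ^ d • act (sigE V hn0 t) y) := by
  refine DirectSum.induction_on y ?_ ?_ ?_
  · exact (IsPD.const (2 * d) 0).congr (fun t ht => by erw [map_zero, smul_zero])
  · intro p u
    obtain ⟨z, rfl⟩ := Submodule.Quotient.mk_surjective _ u
    have hyPD : ∀ y2 : MP(V, p.1.1, p.1.2), IsPD (p.1.1 + p.1.2)
        (fun t : ℚ => t ^ p.1.2 • glAct V p.1.1 p.1.2 (sigE V hn0 t) y2) := by
      intro y2
      refine TensorProduct.induction_on y2 ?_ ?_ ?_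
      · exact (IsPD.const _ 0).congr (fun t ht => by simp)
      · intro w w'
        have hA : IsPD p.1.1 (fun t : ℚ =>
            PiTensorProduct.map (fun _ : Fin p.1.1 => (sigE V hn0 t).toLinearMap) w) := by
          refine (isPD_piMap (LinearMap.id - projP V hn0) (projP V hn0) w).congr ?_
          intro t ht
          have hfun : (fun _ : Fin p.1.1 =>
              (LinearMap.id - projP V hn0) + t • projP V hn0)
              = fun _ : Fin p.1.1 => (sigE V hn0 t).toLinearMap := by
            funext _
            rw [sigL_decomp, sigE_coe V hn0 ht]
          rw [hfun]
        have hB : IsPD p.1.2 (fun t : ℚ => t ^ p.1.2 •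
            PiTensorProduct.map (fun _ : Fin p.1.2 =>
              ((sigE V hn0 t).symm.dualMap.toLinearMap
                : Module.Dual ℚ V →ₗ[ℚ] Module.Dual ℚ V)) w') := by
          refine (isPD_piMap ((projP V hn0).dualMap)
            (LinearMap.id - (projP V hn0).dualMap) w').congr ?_
          intro t ht
          have hfun : (fun _ : Fin p.1.2 =>
              (projP V hn0).dualMap + t • (LinearMap.id - (projP V hn0).dualMap))
              = fun _ : Fin p.1.2 => t • ((sigE V hn0 t).symm.dualMap.toLinearMap
                  : Module.Dual ℚ V →ₗ[ℚ] Module.Dual ℚ V) := by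
            funext _
            rw [sigE_dual_decomp V hn0 ht]
          rw [hfun, piMap_smul]
        have hAB : IsPD (p.1.1 + p.1.2) (fun t : ℚ =>
            (TensorProduct.mk ℚ (⨂[ℚ] (_ : Fin p.1.1), V)
              (⨂[ℚ] (_ : Fin p.1.2), Module.Dual ℚ V))
            (PiTensorProduct.map (fun _ : Fin p.1.1 => (sigE V hn0 t).toLinearMap) w)
            (t ^ p.1.2 • PiTensorProduct.map (fun _ : Fin p.1.2 =>
              ((sigE V hn0 t).symm.dualMap.toLinearMap
                : Module.Dual ℚ V →ₗ[ℚ] Module.Dual ℚ V)) w')) :=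
          hA.bilin hB (TensorProduct.mk ℚ _ _)
        refine hAB.congr ?_
        intro t ht
        beta_reduce
        simp only [glAct, TensorProduct.mk_apply, TensorProduct.map_tmul,
          TensorProduct.tmul_smul]
      · intro y₁ y₂ h₁ h₂
        refine (h₁.add h₂).congr ?_
        intro t ht
        rw [map_add, smul_add]
    have hzPD : ∀ z2 : M p.1.1 p.1.2 ⊗[ℚ] MP(V, p.1.1, p.1.2), IsPD (p.1.1 + p.1.2)
        (fun t : ℚ => t ^ p.1.2 •
          TensorProduct.map LinearMap.id (glAct V p.1.1 p.1.2 (sigE V hn0 t)) z2) := by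
      intro z2
      refine TensorProduct.induction_on z2 ?_ ?_ ?_
      · exact (IsPD.const _ 0).congr (fun t ht => by simp)
      · intro m y2
        refine ((hyPD y2).map (TensorProduct.mk ℚ (M p.1.1 p.1.2)
          (MP(V, p.1.1, p.1.2)) m)).congr ?_
        intro t ht
        simp only [TensorProduct.mk_apply, TensorProduct.map_tmul, LinearMap.id_coe, id_eq,
          TensorProduct.tmul_smul]
      · intro z₁ z₂ h₁ h₂
        refine (h₁.add h₂).congr ?_
        intro t ht
        rw [map_add, smul_add]
    have hp2 := p.2
    have hn2d : p.1.2 ≤ d := le_trans (Nat.le_add_left _ _) hp2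
    have hzz := ((hzPD z).map
      ((DirectSum.lof ℚ {nn : ℕ × ℕ // nn.1 + nn.2 ≤ d}
        (fun q => schurSummand V M ρ q.1.1 q.1.2) p).comp
        (sigmaRel V M ρ p.1.1 p.1.2).mkQ)).shift (d - p.1.2)
    refine (hzz.mono (by omega)).congr ?_
    intro t ht
    beta_reduce
    erw [LinearMap.comp_apply]
    erw [map_smul, map_smul]
    rw [smul_smul, ← pow_add, Nat.sub_add_cancel hn2d,
      act_of V d M ρ act hact (sigE V hn0 t) p z]
    rfl
  · intro y₁ y₂ h₁ h₂
    refine (h₁.add h₂).congr ?_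
    intro t ht
    erw [map_add, smul_add]

end Main

end Stmt9

/-- let `F(V) = ⊕_{n₁+n₂ ≤ d} M(n₁,n₂) ⊗_{Σ} (V^{⊗n₁} ⊗ (V*)^{⊗n₂})` with `GL(V)`
acting trivially on each `M(n₁,n₂)` and diagonally on the tensor factors (and on `V*` by
`g·φ = φ ∘ g⁻¹`).  If `dim V > d`, then `F(V)^{GL(V)} = F(V)^{SL(V)}` as subsets of `F(V)`. -/
theorem stmt_9 (V : Type) [AddCommGroup V] [Module ℚ V] [FiniteDimensional ℚ V]
    (d : ℕ) (hd : d < Module.finrank ℚ V)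
    (M : ℕ → ℕ → Type) [∀ n₁ n₂, AddCommGroup (M n₁ n₂)] [∀ n₁ n₂, Module ℚ (M n₁ n₂)]
    [∀ n₁ n₂, FiniteDimensional ℚ (M n₁ n₂)]
    (ρ : ∀ n₁ n₂, Representation ℚ (Equiv.Perm (Fin n₁) × Equiv.Perm (Fin n₂)) (M n₁ n₂))
    (act : (V ≃ₗ[ℚ] V) → (schurValue V M ρ d →ₗ[ℚ] schurValue V M ρ d))
    (hact : ∀ (g : V ≃ₗ[ℚ] V) (p : {nn : ℕ × ℕ // nn.1 + nn.2 ≤ d})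
      (z : M p.1.1 p.1.2 ⊗[ℚ] MP(V, p.1.1, p.1.2)),
      act g (DirectSum.lof ℚ {nn : ℕ × ℕ // nn.1 + nn.2 ≤ d}
          (fun p => schurSummand V M ρ p.1.1 p.1.2) p (Submodule.Quotient.mk z)) =
        DirectSum.lof ℚ {nn : ℕ × ℕ // nn.1 + nn.2 ≤ d}
          (fun p => schurSummand V M ρ p.1.1 p.1.2) p
          (Submodule.Quotient.mk
            (TensorProduct.map LinearMap.id (glAct V p.1.1 p.1.2 g) z))) :
    {x : schurValue V M ρ d | ∀ g : V ≃ₗ[ℚ] V, act g x = x} =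
      {x : schurValue V M ρ d |
        ∀ g : V ≃ₗ[ℚ] V, LinearMap.det (g : V →ₗ[ℚ] V) = 1 → act g x = x} := by
  classical
  ext x
  simp only [Set.mem_setOf_eq]
  refine ⟨fun h g _ => h g, fun hx g => ?_⟩
  have hn0 : 0 < Module.finrank ℚ V := lt_of_le_of_lt (Nat.zero_le d) hd
  -- For SL-invariant `x`, the action of `g` only depends on `det g`.
  have act_deteq : ∀ g₁ g₂ : V ≃ₗ[ℚ] V,
      LinearMap.det (g₁ : V →ₗ[ℚ] V) = LinearMap.det (g₂ : V →ₗ[ℚ] V) →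
      act g₁ x = act g₂ x := by
    intro g₁ g₂ hdet
    have hs : ((g₂.trans g₁.symm).trans g₁) = g₂ := by
      ext v
      simp
    have hcoe : ((g₂.trans g₁.symm : V ≃ₗ[ℚ] V) : V →ₗ[ℚ] V)
        = (g₁.symm : V →ₗ[ℚ] V).comp (g₂ : V →ₗ[ℚ] V) := by
      ext v
      rfl
    have hdet1 : LinearMap.det ((g₂.trans g₁.symm : V ≃ₗ[ℚ] V) : V →ₗ[ℚ] V) = 1 := by
      rw [hcoe, LinearMap.det_comp, ← hdet, ← LinearMap.det_comp]
      have hid : ((g₁.symm : V →ₗ[ℚ] V).comp (g₁ : V →ₗ[ℚ] V)) = LinearMap.id := by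
        ext v
        simp
      rw [hid, LinearMap.det_id]
    calc act g₁ x = act g₁ (act (g₂.trans g₁.symm) x) := by rw [hx _ hdet1]
      _ = act ((g₂.trans g₁.symm).trans g₁) x := (Stmt9.act_trans hact _ _ x).symm
      _ = act g₂ x := by rw [hs]
  -- The componentwise action of scalars.
  have hscal : ∀ (t : ℚ), t ≠ 0 → ∀ (y : schurValue V M ρ d)
      (p : {nn : ℕ × ℕ // nn.1 + nn.2 ≤ d}),
      Stmt9.pcomp V d M ρ p (act (Stmt9.scalE V t) y)
        = (t ^ p.1.1 * (t⁻¹) ^ p.1.2) • (Stmt9.pcomp V d M ρ p y) := by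
    intro t ht y
    refine DirectSum.induction_on y ?_ ?_ ?_
    · intro p
      change Stmt9.pcomp V d M ρ p (act _ (0 : schurValue V M ρ d)) = _ • Stmt9.pcomp V d M ρ p (0 : schurValue V M ρ d)
      simp
    · intro q u p
      obtain ⟨z, rfl⟩ := Submodule.Quotient.mk_surjective _ u
      rw [Stmt9.act_of V d M ρ act hact (Stmt9.scalE V t) q z]
      have hgl : TensorProduct.map LinearMap.id (glAct V q.1.1 q.1.2 (Stmt9.scalE V t)) z
          = (t ^ q.1.1 * (t⁻¹) ^ q.1.2) • z := by
        rw [Stmt9.glAct_scalE V t ht, TensorProduct.map_smul_right, TensorProduct.map_id]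
        simp
      rw [hgl, Submodule.Quotient.mk_smul]
      rcases eq_or_ne q p with rfl | hqp
      · erw [Stmt9.pcomp_of_same, Stmt9.pcomp_of_same]
        rfl
      · erw [Stmt9.pcomp_of_ne V d M ρ p q hqp, Stmt9.pcomp_of_ne V d M ρ p q hqp, smul_zero]
    · intro a b ha hb p
      erw [map_add (act (Stmt9.scalE V t)) a b, map_add (Stmt9.pcomp V d M ρ p) a b, map_add, ha, hb, smul_add]
      rfl
  -- The one-parameter family of determinant-`t` automorphisms acts polynomially.
  obtain ⟨a, ha⟩ := Stmt9.act_isPD hact hn0 x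
  -- The fundamental componentwise polynomial identity.
  have hcomp : ∀ (p : {nn : ℕ × ℕ // nn.1 + nn.2 ≤ d}) (t : ℚ), t ≠ 0 →
      t ^ (Module.finrank ℚ V * d + p.1.1) • (Stmt9.pcomp V d M ρ p x)
        = ∑ j ∈ Finset.range (2 * d + 1),
            t ^ (Module.finrank ℚ V * j + p.1.2) • (Stmt9.pcomp V d M ρ p (a j)) := by
    intro p t ht
    have htn : (t ^ Module.finrank ℚ V) ≠ 0 := pow_ne_zero _ ht
    have h1 := ha (t ^ Module.finrank ℚ V) htn
    have hdeteq : act (Stmt9.sigE V hn0 (t ^ Module.finrank ℚ V)) x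
        = act (Stmt9.scalE V t) x := by
      apply act_deteq
      rw [Stmt9.sigE_det V hn0 htn, Stmt9.scalE_det V ht]
    beta_reduce at h1
    rw [hdeteq] at h1
    have h1p := congrArg (Stmt9.pcomp V d M ρ p) h1
    rw [map_smul, map_sum] at h1p
    simp only [map_smul] at h1p
    rw [hscal t ht x p] at h1p
    have h3 := congrArg (fun w => t ^ p.1.2 • w) h1p
    rw [Finset.smul_sum] at h3
    have hL : t ^ p.1.2 • (t ^ Module.finrank ℚ V) ^ d •
        ((t ^ p.1.1 * (t⁻¹) ^ p.1.2) • Stmt9.pcomp V d M ρ p x)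
        = t ^ (Module.finrank ℚ V * d + p.1.1) • Stmt9.pcomp V d M ρ p x := by
      rw [smul_smul, smul_smul]
      congr 1
      rw [← pow_mul, inv_pow]
      field_simp
      ring
    rw [hL] at h3
    rw [h3]
    apply Finset.sum_congr rfl
    intro j _
    rw [smul_smul, ← pow_mul, ← pow_add, Nat.add_comm p.1.2 (Module.finrank ℚ V * j)]
  -- Coefficient extraction.
  have haj : ∀ (p : {nn : ℕ × ℕ // nn.1 + nn.2 ≤ d}) (j₀ : ℕ), j₀ < 2 * d + 1 →
      Stmt9.pcomp V d M ρ p (a j₀)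
        = if p.1.1 = p.1.2 ∧ j₀ = d then Stmt9.pcomp V d M ρ p x else 0 := by
    intro p j₀ hj₀
    have hp2 := p.2
    have hfil := Stmt9.coeff_extract' (2 * d + 1)
      (fun j => Module.finrank ℚ V * j + p.1.2) (fun j => Stmt9.pcomp V d M ρ p (a j))
      (Module.finrank ℚ V * d + p.1.1) (Stmt9.pcomp V d M ρ p x) (hcomp p)
      (Module.finrank ℚ V * j₀ + p.1.2)
    have hfe : (Finset.range (2 * d + 1)).filter
        (fun j => Module.finrank ℚ V * j + p.1.2 = Module.finrank ℚ V * j₀ + p.1.2)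
        = {j₀} := by
      apply Finset.ext
      intro j
      simp only [Finset.mem_filter, Finset.mem_range, Finset.mem_singleton]
      constructor
      · rintro ⟨hj, he⟩
        exact Nat.eq_of_mul_eq_mul_left hn0 (by omega)
      · rintro rfl
        exact ⟨hj₀, rfl⟩
    rw [hfe, Finset.sum_singleton] at hfil
    rw [hfil]
    by_cases hco : Module.finrank ℚ V * d + p.1.1 = Module.finrank ℚ V * j₀ + p.1.2
    · obtain ⟨h12, hjd⟩ := Stmt9.key_arith hd (le_trans (Nat.le_add_right _ _) hp2)
        (le_trans (Nat.le_add_left _ _) hp2) hco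
      rw [if_pos hco, if_pos ⟨h12, hjd⟩]
    · rw [if_neg hco, if_neg ?_]
      rintro ⟨h12, rfl⟩
      exact hco (by omega)
  have hxp : ∀ p : {nn : ℕ × ℕ // nn.1 + nn.2 ≤ d}, p.1.1 ≠ p.1.2 →
      Stmt9.pcomp V d M ρ p x = 0 := by
    intro p hne
    have hp2 := p.2
    have hfil := Stmt9.coeff_extract' (2 * d + 1)
      (fun j => Module.finrank ℚ V * j + p.1.2) (fun j => Stmt9.pcomp V d M ρ p (a j))
      (Module.finrank ℚ V * d + p.1.1) (Stmt9.pcomp V d M ρ p x) (hcomp p)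
      (Module.finrank ℚ V * d + p.1.1)
    rw [if_pos rfl] at hfil
    rw [← hfil]
    have hfe : (Finset.range (2 * d + 1)).filter
        (fun j => Module.finrank ℚ V * j + p.1.2 = Module.finrank ℚ V * d + p.1.1)
        = ∅ := by
      apply Finset.eq_empty_of_forall_notMem
      intro j hj
      rw [Finset.mem_filter] at hj
      obtain ⟨h12, _⟩ := Stmt9.key_arith hd (le_trans (Nat.le_add_right _ _) hp2)
        (le_trans (Nat.le_add_left _ _) hp2) hj.2.symm
      exact hne h12
    rw [hfe, Finset.sum_empty]
  -- The family `sigE` therefore fixes `x`.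
  have hfinal : ∀ t : ℚ, t ≠ 0 → act (Stmt9.sigE V hn0 t) x = x := by
    intro t ht
    have h1 := ha t ht
    beta_reduce at h1
    have h2 : (∑ j ∈ Finset.range (2 * d + 1), t ^ j • a j) = t ^ d • x := by
      refine Stmt9.pcomp_ext V d M ρ fun p => ?_
      rw [map_sum, map_smul]
      calc ∑ j ∈ Finset.range (2 * d + 1), Stmt9.pcomp V d M ρ p (t ^ j • a j)
          = ∑ j ∈ Finset.range (2 * d + 1),
              t ^ j • (if p.1.1 = p.1.2 ∧ j = d then Stmt9.pcomp V d M ρ p x else 0) := by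
            apply Finset.sum_congr rfl
            intro j hj
            rw [map_smul, haj p j (Finset.mem_range.1 hj)]
        _ = t ^ d • Stmt9.pcomp V d M ρ p x := by
            by_cases h12 : p.1.1 = p.1.2
            · rw [Finset.sum_eq_single_of_mem d (Finset.mem_range.2 (by omega))]
              · rw [if_pos ⟨h12, rfl⟩]
              · intro j _ hjd
                rw [if_neg (fun hc => hjd hc.2), smul_zero]
            · rw [hxp p h12, smul_zero]
              apply Finset.sum_eq_zero
              intro j _
              rw [if_neg (fun hc => h12 hc.1), smul_zero]
    rw [h2] at h1
    have hne : (t : ℚ) ^ d ≠ 0 := pow_ne_zero _ ht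
    calc act (Stmt9.sigE V hn0 t) x
        = (t ^ d)⁻¹ • (t ^ d • act (Stmt9.sigE V hn0 t) x) := (inv_smul_smul₀ hne _).symm
      _ = (t ^ d)⁻¹ • (t ^ d • x) := by rw [h1]
      _ = x := inv_smul_smul₀ hne _
  -- Conclusion.
  have hdg : LinearMap.det (g : V →ₗ[ℚ] V) ≠ 0 := (LinearEquiv.isUnit_det' g).ne_zero
  have hfin2 := act_deteq g (Stmt9.sigE V hn0 (LinearMap.det (g : V →ₗ[ℚ] V)))
    (by rw [Stmt9.sigE_det V hn0 hdg])
  rw [hfin2, hfinal _ hdg]
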